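/- If the conflicts of a knowledge base all have size at most 2 and the priority relation is total, then there is exactly one Pareto-optimal repair. -/
import Mathlib


variable {F : Type*}

/-- A set is consistent w.r.t. a family of conflicts if it includes no conflict. -/
def Consistent (Conf : Set (Set F)) (S : Set F) : Prop := ∀ C ∈ Conf, ¬ C ⊆ S

/-- A repair: an inclusion-maximal consistent subset of the dataset `D`. -/
def IsRepair (D : Set F) (Conf : Set (Set F)) (R : Set F) : Prop :=
  R ⊆ D ∧ Consistent Conf R ∧ ∀ S, S ⊆ D → Consistent Conf S → R ⊆ S → S = R

/-- A relation is acyclic if it admits no directed cycle. -/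
def Acyclic (r : F → F → Prop) : Prop := ∀ a, ¬ Relation.TransGen r a a

/-- A priority relation: acyclic, relating only facts co-occurring in some conflict. -/
def IsPriority (Conf : Set (Set F)) (p : F → F → Prop) : Prop :=
  Acyclic p ∧ ∀ a b, p a b → ∃ C ∈ Conf, a ∈ C ∧ b ∈ C

/-- A total priority relation compares every pair of distinct conflicting facts. -/
def IsTotalPriority (Conf : Set (Set F)) (p : F → F → Prop) : Prop :=
  IsPriority Conf p ∧
    ∀ a b, a ≠ b → (∃ C ∈ Conf, a ∈ C ∧ b ∈ C) → p a b ∨ p b a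

/-- A completion of `p` is a total priority relation extending `p`. -/
def IsCompletion (Conf : Set (Set F)) (p p' : F → F → Prop) : Prop :=
  IsTotalPriority Conf p' ∧ ∀ a b, p a b → p' a b

/-- A Pareto improvement of `R`: a consistent `B ⊆ D` containing some `β ∉ R`
with `β ≻ α` for every `α ∈ R \ B`. -/
def ParetoImprovement (D : Set F) (Conf : Set (Set F)) (p : F → F → Prop)
    (R B : Set F) : Prop :=
  B ⊆ D ∧ Consistent Conf B ∧ ∃ β ∈ B, β ∉ R ∧ ∀ α ∈ R, α ∉ B → p β α

/-- A Pareto-optimal repair: a repair with no Pareto improvement. -/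
def ParetoOptimal (D : Set F) (Conf : Set (Set F)) (p : F → F → Prop) (R : Set F) : Prop :=
  IsRepair D Conf R ∧ ¬ ∃ B, ParetoImprovement D Conf p R B

/-- A completion-optimal repair: Pareto-optimal for some completion of `p`. -/
def CompletionOptimal (D : Set F) (Conf : Set (Set F)) (p : F → F → Prop) (R : Set F) : Prop :=
  ∃ p', IsCompletion Conf p p' ∧ ParetoOptimal D Conf p' R

/-- If all conflicts are binary (two-element subsets of `D`) and the priority relation
is total (and acyclic), then there is exactly one Pareto-optimal repair. -/
theorem unique_paretoOptimal_of_binary_total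
    (D : Set F) (hD : D.Finite) (Conf : Set (Set F))
    (hbin : ∀ C ∈ Conf, C ⊆ D ∧ ∃ a b, a ≠ b ∧ C = {a, b})
    (p : F → F → Prop) (htot : IsTotalPriority Conf p) :
    ∃! R, ParetoOptimal D Conf p R := by
  classical
  obtain ⟨⟨hacyc, hpc⟩, htotal⟩ := htot
  -- Key: any p-edge comes from a binary conflict in D
  have hkey : ∀ a b, p a b → a ≠ b ∧ {a, b} ∈ Conf ∧ a ∈ D ∧ b ∈ D := by
    intro a b hab
    obtain ⟨C, hC, haC, hbC⟩ := hpc a b hab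
    obtain ⟨hCD, c, d, hcd, rfl⟩ := hbin C hC
    have hne : a ≠ b := by rintro rfl; exact hacyc a (Relation.TransGen.single hab)
    have hset : ({a, b} : Set F) = {c, d} := by
      rcases haC with rfl | rfl <;> rcases hbC with rfl | rfl <;>
        simp_all [Set.pair_comm]
    refine ⟨hne, ?_, hCD haC, hCD hbC⟩
    rw [hset]; exact hC
  -- Consistency characterizations
  have hcons1 : ∀ S : Set F, Consistent Conf S → ∀ a b, a ∈ S → b ∈ S → ¬ p a b := by
    intro S hS a b ha hb hab
    exact hS {a, b} (hkey a b hab).2.1 (Set.insert_subset ha (Set.singleton_subset_iff.2 hb))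
  have hcons2 : ∀ S : Set F, (∀ a b, a ∈ S → b ∈ S → ¬ p a b) → Consistent Conf S := by
    intro S h C hC hsub
    obtain ⟨hCD, a, b, hab, rfl⟩ := hbin C hC
    have ha : a ∈ S := hsub (Set.mem_insert a {b})
    have hb : b ∈ S := hsub (Set.mem_insert_of_mem a rfl)
    rcases htotal a b hab ⟨{a, b}, hC, Set.mem_insert a {b}, Set.mem_insert_of_mem a rfl⟩ with
      h1 | h1
    · exact h a b ha hb h1
    · exact h b a hb ha h1
  -- p is well-founded
  have hwf : WellFounded (fun a b => p a b) := by
    haveI hDfin : Finite ↥D := hD.to_subtype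
    let q : ↥D → ↥D → Prop := fun a b => p a b
    have hmap : ∀ (x y : ↥D), Relation.TransGen q x y → Relation.TransGen p x.1 y.1 := by
      intro x y h
      induction h with
      | single h => exact .single h
      | tail _ h ih => exact .tail ih h
    haveI : IsTrans ↥D (Relation.TransGen q) := ⟨fun _ _ _ => Relation.TransGen.trans⟩
    haveI : IsIrrefl ↥D (Relation.TransGen q) := ⟨fun a h => hacyc a.1 (hmap a a h)⟩
    have wfT : WellFounded (Relation.TransGen q) := Finite.wellFounded_of_trans_of_irrefl _
    have wfq : WellFounded q := Subrelation.wf (fun h => Relation.TransGen.single h) wfT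
    constructor
    intro x
    by_cases hx : x ∈ D
    · have hacc : ∀ a : ↥D, Acc (fun a b => p a b) a.1 := by
        intro a
        refine wfq.induction (C := fun a => Acc (fun a b => p a b) a.1) a ?_
        intro a ih
        constructor
        intro y hy
        exact ih ⟨y, (hkey y a.1 hy).2.2.1⟩ hy
      exact hacc ⟨x, hx⟩
    · constructor
      intro y hy
      exact absurd (hkey y x hy).2.2.2 hx
  -- the grounded set via well-founded recursion
  obtain ⟨f, hf⟩ : ∃ f : F → Prop, ∀ x, f x ↔ (x ∈ D ∧ ∀ y, p y x → ¬ f y) := by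
    refine ⟨hwf.fix (fun x ih => x ∈ D ∧ ∀ y (h : p y x), ¬ ih y h), fun x => ?_⟩
    rw [WellFounded.fix_eq]
  set R : Set F := {x | f x} with hR
  have hRD : R ⊆ D := fun x hx => ((hf x).1 hx).1
  have hRcons : Consistent Conf R := hcons2 R (fun a b ha hb hab => ((hf b).1 hb).2 a hab ha)
  have hRmax : ∀ S, S ⊆ D → Consistent Conf S → R ⊆ S → S = R := by
    intro S hSD hScons hRS
    refine Set.Subset.antisymm ?_ hRS
    intro x hx
    show f x
    refine (hf x).2 ⟨hSD hx, fun y hyx hyf => ?_⟩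
    exact hcons1 S hScons y x (hRS hyf) hx hyx
  have hRrep : IsRepair D Conf R := ⟨hRD, hRcons, hRmax⟩
  have hRopt : ParetoOptimal D Conf p R := by
    refine ⟨hRrep, ?_⟩
    rintro ⟨B, hBD, hBcons, β, hβB, hβR, himp⟩
    have hβD : β ∈ D := hBD hβB
    have hnf : ¬ f β := hβR
    rw [hf] at hnf
    push_neg at hnf
    obtain ⟨y, hyβ, hyf⟩ := hnf hβD
    have hyR : y ∈ R := hyf
    have hyB : y ∉ B := fun hyB => hcons1 B hBcons y β hyB hβB hyβ
    have hβy : p β y := himp y hyR hyB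
    exact hacyc y (Relation.TransGen.tail (.single hyβ) hβy)
  refine ⟨R, hRopt, ?_⟩
  rintro R' ⟨⟨hR'D, hR'cons, hR'max⟩, hR'noimp⟩
  by_contra hne
  set Δ : Set F := {x | (x ∈ R' ∧ x ∉ R) ∨ (x ∈ R ∧ x ∉ R')} with hΔdef
  have hΔne : Δ.Nonempty := by
    by_contra h
    push_neg at h
    apply hne
    apply Set.ext
    intro x
    constructor
    · intro hx
      by_contra hx'
      have : x ∈ Δ := Or.inl ⟨hx, hx'⟩
      rw [h] at this; exact this
    · intro hx
      by_contra hx'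
      have : x ∈ Δ := Or.inr ⟨hx, hx'⟩
      rw [h] at this; exact this
  obtain ⟨x, hxΔ, hmin⟩ := hwf.has_min Δ hΔne
  rcases hxΔ with ⟨hxR', hxR⟩ | ⟨hxR, hxR'⟩
  · -- x ∈ R' \ R : some attacker y of x is in R, y ∉ R', contradicting minimality
    have hnf : ¬ f x := hxR
    rw [hf] at hnf
    push_neg at hnf
    obtain ⟨y, hyx, hyf⟩ := hnf (hR'D hxR')
    have hyR : y ∈ R := hyf
    have hyR' : y ∉ R' := fun hyR' => hcons1 R' hR'cons y x hyR' hxR' hyx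
    exact hmin y (Or.inr ⟨hyR, hyR'⟩) hyx
  · -- x ∈ R \ R' : build a Pareto improvement of R'
    have hnoatt : ∀ y, p y x → y ∉ R' := by
      intro y hyx hyR'
      have hyR : y ∉ R := fun hyR => ((hf x).1 hxR).2 y hyx hyR
      exact hmin y (Or.inl ⟨hyR', hyR⟩) hyx
    set B : Set F := insert x {a ∈ R' | ¬ p x a} with hBdef
    apply hR'noimp
    refine ⟨B, ?_, ?_, x, Set.mem_insert x _, hxR', ?_⟩
    · intro a ha
      rcases ha with rfl | ⟨haR', -⟩
      · exact hRD hxR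
      · exact hR'D haR'
    · refine hcons2 B ?_
      intro a b ha hb hab
      rcases ha with rfl | ⟨haR', hax⟩ <;> rcases hb with rfl | ⟨hbR', hbx⟩
      · exact hacyc _ (Relation.TransGen.single hab)
      · exact hbx hab
      · exact hnoatt _ hab haR'
      · exact hcons1 R' hR'cons a b haR' hbR' hab
    · intro α hαR' hαB
      by_contra hpxα
      exact hαB (Set.mem_insert_of_mem x ⟨hαR', hpxα⟩)
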